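/- For all reals x and y and every γ ≥ 0, |⟨x⟩^γ x - ⟨y⟩^γ y| ≤ C |x - y| (⟨y⟩^γ + ⟨x - y⟩^γ) for some constant C depending only on γ, where ⟨x⟩ = (1 + x²)^{1/2}. -/

import Mathlib

open Real Set

lemma jb_tri (t y : ℝ) : Real.sqrt (1 + t ^ 2) ≤ Real.sqrt (1 + y ^ 2) + |t - y| := by
  have h1 : |y| ≤ Real.sqrt (1 + y ^ 2) := by
    rw [← Real.sqrt_sq_eq_abs]
    exact Real.sqrt_le_sqrt (by nlinarith)
  have h0 : (0:ℝ) ≤ Real.sqrt (1 + y ^ 2) + |t - y| := by positivity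
  rw [show Real.sqrt (1 + y ^ 2) + |t - y| = Real.sqrt ((Real.sqrt (1 + y ^ 2) + |t - y|) ^ 2) by
    rw [Real.sqrt_sq h0]]
  apply Real.sqrt_le_sqrt
  have hs : Real.sqrt (1 + y ^ 2) ^ 2 = 1 + y ^ 2 := Real.sq_sqrt (by positivity)
  have h2 : y * (t - y) ≤ |y| * |t - y| := by
    calc y * (t - y) ≤ |y * (t - y)| := le_abs_self _
    _ = |y| * |t - y| := abs_mul _ _
  nlinarith [sq_abs (t - y), abs_nonneg (t - y), h1, abs_nonneg y]

lemma jb_mono {a b : ℝ} (h : |a| ≤ |b|) :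
    Real.sqrt (1 + a ^ 2) ≤ Real.sqrt (1 + b ^ 2) := by
  apply Real.sqrt_le_sqrt
  nlinarith [sq_abs a, sq_abs b, abs_nonneg a]

theorem stmt9 (γ : ℝ) (hγ : 0 ≤ γ) : ∃ C : ℝ, 0 < C ∧ ∀ x y : ℝ,
    |Real.sqrt (1 + x ^ 2) ^ γ * x - Real.sqrt (1 + y ^ 2) ^ γ * y|
      ≤ C * |x - y| * (Real.sqrt (1 + y ^ 2) ^ γ + Real.sqrt (1 + (x - y) ^ 2) ^ γ) := by
  refine ⟨(γ + 1) * 2 ^ γ, by positivity, fun x y => ?_⟩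
  have key : ∀ t : ℝ, Real.sqrt (1 + t ^ 2) ^ γ = (1 + t ^ 2) ^ (γ / 2) := by
    intro t
    rw [Real.sqrt_eq_rpow, ← Real.rpow_mul (by positivity)]
    ring_nf
  set A := Real.sqrt (1 + y ^ 2) ^ γ with hA
  set B := Real.sqrt (1 + (x - y) ^ 2) ^ γ with hB
  have hApos : 0 < A := by rw [hA]; positivity
  have hBpos : 0 < B := by rw [hB]; positivity
  set g : ℝ → ℝ := fun t => (1 + t ^ 2) ^ (γ / 2) * t with hg
  set g' : ℝ → ℝ := fun t =>
    2 * t * (γ / 2) * (1 + t ^ 2) ^ (γ / 2 - 1) * t + (1 + t ^ 2) ^ (γ / 2) * 1 with hg'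
  have hd : ∀ t : ℝ, HasDerivAt g (g' t) t := by
    intro t
    have h1 : HasDerivAt (fun s : ℝ => 1 + s ^ 2) (2 * t) t := by
      simpa using ((hasDerivAt_pow 2 t).const_add 1)
    have h2 := h1.rpow_const (p := γ / 2) (Or.inl (by positivity))
    simpa [hg, hg', Pi.mul_def, mul_comm, mul_assoc, mul_left_comm] using h2.mul (hasDerivAt_id' t)
  -- pointwise bound on the derivative over uIcc x y
  set M : ℝ := (γ + 1) * 2 ^ γ * (A + B) with hM
  have bound : ∀ t ∈ uIcc x y, ‖g' t‖ ≤ M := by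
    intro t ht
    have hu : (0:ℝ) < 1 + t ^ 2 := by positivity
    -- step 1: |g' t| ≤ (γ+1) * (1+t²)^(γ/2)
    have e1 : (1 + t ^ 2) ^ (γ / 2 - 1) * t ^ 2 ≤ (1 + t ^ 2) ^ (γ / 2) := by
      rw [Real.rpow_sub hu, Real.rpow_one, div_mul_eq_mul_div, div_le_iff₀ hu]
      have : t ^ 2 ≤ 1 + t ^ 2 := by nlinarith
      have h' : (0:ℝ) ≤ (1 + t ^ 2) ^ (γ / 2) := le_of_lt (Real.rpow_pos_of_pos hu _)
      nlinarith
    have step1 : ‖g' t‖ ≤ (γ + 1) * (1 + t ^ 2) ^ (γ / 2) := by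
      have hnn : 0 ≤ g' t := by
        simp only [hg']
        have h1 := le_of_lt (Real.rpow_pos_of_pos hu (γ / 2))
        have h2 := le_of_lt (Real.rpow_pos_of_pos hu (γ / 2 - 1))
        nlinarith [mul_nonneg (mul_nonneg hγ (sq_nonneg t)) h2]
      rw [Real.norm_eq_abs, abs_of_nonneg hnn]
      simp only [hg']
      nlinarith [e1, le_of_lt (Real.rpow_pos_of_pos hu (γ / 2)),
        mul_le_mul_of_nonneg_left e1 hγ]
    -- step 2: (1+t²)^(γ/2) ≤ 2^γ * (A + B)
    have hty : |t - y| ≤ |x - y| := by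
      rcases Set.mem_uIcc.mp ht with ⟨h1, h2⟩ | ⟨h1, h2⟩ <;>
        rw [abs_sub_le_iff] <;> constructor <;>
        cases abs_sub_le_iff.mp (le_refl |x - y|) <;>
        cases le_total x y <;>
        simp_all [abs_of_nonneg, abs_of_nonpos, sub_nonneg, sub_nonpos] <;> linarith
    have h3 : Real.sqrt (1 + t ^ 2) ≤ Real.sqrt (1 + y ^ 2) + Real.sqrt (1 + (x - y) ^ 2) := by
      calc Real.sqrt (1 + t ^ 2) ≤ Real.sqrt (1 + y ^ 2) + |t - y| := jb_tri t y
      _ ≤ Real.sqrt (1 + y ^ 2) + Real.sqrt (1 + (x - y) ^ 2) := by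
          gcongr
          calc |t - y| ≤ |x - y| := hty
          _ = Real.sqrt ((x - y) ^ 2) := (Real.sqrt_sq_eq_abs _).symm
          _ ≤ Real.sqrt (1 + (x - y) ^ 2) := Real.sqrt_le_sqrt (by nlinarith)
    set a := Real.sqrt (1 + y ^ 2) with ha
    set b := Real.sqrt (1 + (x - y) ^ 2) with hb
    have ha0 : 0 ≤ a := Real.sqrt_nonneg _
    have hb0 : 0 ≤ b := Real.sqrt_nonneg _
    have h4 : a + b ≤ 2 * max a b := by
      rcases le_total a b with h | h <;> simp [max_eq_right, max_eq_left, h] <;> linarith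
    have step2 : (1 + t ^ 2) ^ (γ / 2) ≤ 2 ^ γ * (A + B) := by
      rw [← key t]
      calc Real.sqrt (1 + t ^ 2) ^ γ ≤ (2 * max a b) ^ γ := by
            apply Real.rpow_le_rpow (Real.sqrt_nonneg _) (h3.trans h4) hγ
      _ = 2 ^ γ * max a b ^ γ := Real.mul_rpow (by norm_num) (le_trans ha0 (le_max_left a b))
      _ ≤ 2 ^ γ * (A + B) := by
            gcongr
            rcases le_total a b with h | h
            · rw [max_eq_right h, hA, hB]
              exact le_add_of_nonneg_left (le_of_lt hApos)
            · rw [max_eq_left h, hA, hB]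
              exact le_add_of_nonneg_right (le_of_lt hBpos)
    calc ‖g' t‖ ≤ (γ + 1) * (1 + t ^ 2) ^ (γ / 2) := step1
    _ ≤ (γ + 1) * (2 ^ γ * (A + B)) := by
        apply mul_le_mul_of_nonneg_left step2 (by linarith)
    _ = M := by rw [hM]; ring
  -- mean value inequality
  have mvt := Convex.norm_image_sub_le_of_norm_hasDerivWithin_le
    (f := g) (f' := g') (s := uIcc x y) (C := M)
    (fun t ht => (hd t).hasDerivWithinAt) bound (convex_uIcc x y)
    Set.left_mem_uIcc Set.right_mem_uIcc
  have := mvt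
  rw [Real.norm_eq_abs, Real.norm_eq_abs] at this
  calc |Real.sqrt (1 + x ^ 2) ^ γ * x - Real.sqrt (1 + y ^ 2) ^ γ * y|
      = |g y - g x| := by rw [hg]; simp only [key]; rw [abs_sub_comm]
  _ ≤ M * |y - x| := this
  _ = (γ + 1) * 2 ^ γ * |x - y| * (A + B) := by rw [hM, abs_sub_comm]; ring
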